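/- Let θ > 0. Let (α_b)_{b≥2} be nonnegative real numbers satisfying ∑_{b=2}^∞ α_b (log b)/b² < ∞, and set λ_b = b(b−1)/2 + α_b for each integer b ≥ 2. Let G_n(b) ∈ [0,1] be defined for all integers 2 ≤ b ≤ n, with G_b(b) = 1 for all b ≥ 2 and |G_{n+1}(b) − G_n(b)| ≤ α_{n+1}/λ_{n+1} for all 2 ≤ b ≤ n, and let G_∞(b) = lim_{n→∞} G_n(b). Let h_{n−1} = ∑_{i=1}^{n−1} 1/i and E_n = (θ/2) ∑_{b=2}^n (b/λ_b) G_n(b). Then lim_{n→∞} (E_n − θ h_{n−1}) = −ρ, where ρ = (θ/2) ∑_{b=2}^∞ b(2/(b(b−1)) − 1/λ_b) + (θ/2) ∑_{b=2}^∞ (b/λ_b)(1 − G_∞(b)) ≥ 0, both series being convergent. -/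

import Mathlib

open Filter Finset Real

private lemma aux1 {A L x Λ : ℝ} (hA : 0 ≤ A) (hx : 0 ≤ x) (hL : 1/2 ≤ L)
    (hΛ : (x+2)*(x+1)/2 ≤ Λ) : 2*A*(x+2)^2 ≤ 16*A*L*(x+1)*Λ := by
  nlinarith [mul_nonneg (mul_nonneg (mul_nonneg hA (by linarith : (0:ℝ) ≤ x+1))
      (by linarith : (0:ℝ) ≤ L)) (sub_nonneg.2 hΛ),
    mul_nonneg (mul_nonneg hA (by positivity : (0:ℝ) ≤ (x+2)*(x+1)^2))
      (by linarith : (0:ℝ) ≤ L - 1/2),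
    mul_nonneg (mul_nonneg hA hx) (by positivity : (0:ℝ) ≤ (x+2)*x),
    mul_nonneg (mul_nonneg hA hx) hx, mul_nonneg hA hx]

private lemma aux2 {A L y Λ : ℝ} (hA : 0 ≤ A) (hy : 3 ≤ y) (hL : 1 ≤ L)
    (hΛ : y*(y-1)/2 ≤ Λ) : A * y^2 ≤ 3*A*L*Λ := by
  nlinarith [mul_nonneg (mul_nonneg hA (by linarith : (0:ℝ) ≤ L)) (sub_nonneg.2 hΛ),
    mul_nonneg (mul_nonneg hA (by linarith : (0:ℝ) ≤ L - 1))
      (by nlinarith : (0:ℝ) ≤ y*(y-1)/2),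
    mul_nonneg (mul_nonneg hA (by linarith : (0:ℝ) ≤ y - 3)) (by linarith : (0:ℝ) ≤ y)]

private lemma aux3 {A L H y Λ : ℝ} (hA : 0 ≤ A) (hH0 : 0 ≤ H) (hH : H ≤ 1 + L)
    (hL : 1 ≤ L) (hy : 2 ≤ y) (hΛ : (y+1)*y/2 ≤ Λ) : A*H*(y+1)^2 ≤ 8*A*L*Λ := by
  have h1 : A*H*(y+1)^2 ≤ A*(2*L)*(y+1)^2 := by
    have h12 : H ≤ 2*L := by linarith
    nlinarith [mul_nonneg hA (by positivity : (0:ℝ) ≤ (y+1)^2)]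
  have hq : (y+1)^2 * 2 ≤ 8 * ((y+1)*y/2) := by nlinarith
  have hAL : 0 ≤ A * L := mul_nonneg hA (by linarith)
  have h2 : A*(2*L)*(y+1)^2 ≤ 8*A*L*((y+1)*y/2) := by
    nlinarith [mul_le_mul_of_nonneg_left hq hAL]
  have h3 : 8*A*L*((y+1)*y/2) ≤ 8*A*L*Λ := by
    have h8 : (0:ℝ) ≤ 8*A*L := by linarith [mul_nonneg hA (by linarith : (0:ℝ) ≤ L)]
    exact mul_le_mul_of_nonneg_left hΛ h8
  linarith

private lemma aux4 {A L Λ : ℝ} (hA : 0 ≤ A) (hL : 1/2 ≤ L) (hΛ : 1 ≤ Λ) :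
    A * 1 * 2^2 ≤ 8*A*L*Λ := by
  nlinarith [mul_nonneg (mul_nonneg hA (by linarith : (0:ℝ) ≤ L)) (sub_nonneg.2 hΛ),
    mul_nonneg hA (by linarith : (0:ℝ) ≤ L - 1/2)]

/-- Proposition 4.1 (analytic content): `E[S_n] - θ h_{n-1} → -ρ`, where
`ρ = (θ/2)∑_{b=2}^∞ b(2/(b(b-1)) - 1/λ_b) + (θ/2)∑_{b=2}^∞ (b/λ_b)(1 - G_∞(b)) ≥ 0`,
both series being convergent. -/
theorem stmt_14 (θ : ℝ) (hθ : 0 < θ)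
    (α : ℕ → ℝ) (hα : ∀ b : ℕ, 2 ≤ b → 0 ≤ α b)
    (lam : ℕ → ℝ) (hlam : ∀ b : ℕ, lam b = (b : ℝ) * ((b : ℝ) - 1) / 2 + α b)
    (G : ℕ → ℕ → ℝ)
    (hG01 : ∀ n b : ℕ, 2 ≤ b → b ≤ n → G n b ∈ Set.Icc (0 : ℝ) 1)
    (hGbb : ∀ b : ℕ, 2 ≤ b → G b b = 1)
    (hGinc : ∀ n b : ℕ, 2 ≤ b → b ≤ n → |G (n + 1) b - G n b| ≤ α (n + 1) / lam (n + 1))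
    (hseg : Summable (fun b : ℕ => α b * Real.log b / (b : ℝ) ^ 2))
    (Ginf : ℕ → ℝ)
    (hGinf : ∀ b : ℕ, 2 ≤ b →
      Filter.Tendsto (fun n => G n b) Filter.atTop (nhds (Ginf b)))
    (h : ℕ → ℝ) (hh : ∀ n : ℕ, h n = ∑ i ∈ Finset.Icc 1 (n - 1), (1 : ℝ) / i)
    (E : ℕ → ℝ)
    (hE : ∀ n : ℕ, E n = θ / 2 * ∑ b ∈ Finset.Icc 2 n, (b : ℝ) / lam b * G n b) :
    Summable
        (fun j : ℕ => ((j : ℝ) + 2) * (2 / (((j : ℝ) + 2) * ((j : ℝ) + 1)) - 1 / lam (j + 2))) ∧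
      Summable (fun j : ℕ => ((j : ℝ) + 2) / lam (j + 2) * (1 - Ginf (j + 2))) ∧
      0 ≤ θ / 2 * (∑' j : ℕ,
            ((j : ℝ) + 2) * (2 / (((j : ℝ) + 2) * ((j : ℝ) + 1)) - 1 / lam (j + 2))) +
          θ / 2 * (∑' j : ℕ, ((j : ℝ) + 2) / lam (j + 2) * (1 - Ginf (j + 2))) ∧
      Filter.Tendsto (fun n : ℕ => E n - θ * h n) Filter.atTop
        (nhds (-(θ / 2 * (∑' j : ℕ,
            ((j : ℝ) + 2) * (2 / (((j : ℝ) + 2) * ((j : ℝ) + 1)) - 1 / lam (j + 2))) +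
          θ / 2 * (∑' j : ℕ, ((j : ℝ) + 2) / lam (j + 2) * (1 - Ginf (j + 2)))))) := by
  have hcast : ∀ b : ℕ, 2 ≤ b → (2:ℝ) ≤ (b:ℝ) := fun b hb => by exact_mod_cast hb
  have hlamge : ∀ b : ℕ, 2 ≤ b → (b:ℝ) * ((b:ℝ) - 1) / 2 ≤ lam b := by
    intro b hb; rw [hlam b]; linarith [hα b hb]
  have hlampos : ∀ b : ℕ, 2 ≤ b → 0 < lam b := by
    intro b hb
    have h2 := hcast b hb
    have := hlamge b hb
    nlinarith
  have hlog2 : (1:ℝ)/2 ≤ Real.log 2 := by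
    have := Real.log_two_gt_d9; linarith
  have hloge : (1:ℝ) ≤ Real.log 3 := by
    rw [Real.le_log_iff_exp_le (by norm_num)]
    calc Real.exp 1 ≤ 2.7182818286 := (Real.exp_one_lt_d9).le
      _ ≤ 3 := by norm_num
  have hlog_ge_one : ∀ x : ℝ, 3 ≤ x → 1 ≤ Real.log x := fun x hx =>
    hloge.trans (Real.log_le_log (by norm_num) hx)
  have hlog_half : ∀ x : ℝ, 2 ≤ x → (1:ℝ)/2 ≤ Real.log x := fun x hx =>
    hlog2.trans (Real.log_le_log (by norm_num) hx)
  -- the first series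
  set t1 : ℕ → ℝ := fun j =>
    ((j : ℝ) + 2) * (2 / (((j : ℝ) + 2) * ((j : ℝ) + 1)) - 1 / lam (j + 2)) with ht1
  have hlamval : ∀ j : ℕ, lam (j+2) = ((j:ℝ)+2) * ((j:ℝ)+1) / 2 + α (j+2) := by
    intro j
    rw [hlam (j+2)]
    push_cast
    ring_nf
  have ht1eq : ∀ j : ℕ, t1 j = 2 * α (j+2) / (((j:ℝ)+1) * lam (j+2)) := by
    intro j
    have hpos := hlampos (j+2) (by omega)
    have h1 : ((j:ℝ)+2) ≠ 0 := by positivity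
    have h2 : ((j:ℝ)+1) ≠ 0 := by positivity
    have hne1 : ((j:ℝ)+2) * ((j:ℝ)+1) ≠ 0 := by positivity
    have key : 2 / (((j:ℝ)+2)*((j:ℝ)+1)) - 1/lam (j+2)
        = 2*α (j+2)/((((j:ℝ)+2)*((j:ℝ)+1)) * lam (j+2)) := by
      rw [div_sub_div _ _ hne1 hpos.ne']
      congr 1
      rw [hlamval j]; ring
    rw [ht1]
    simp only
    rw [key]
    field_simp
  have ht1nonneg : ∀ j : ℕ, 0 ≤ t1 j := by
    intro j
    rw [ht1eq j]
    have hpos := hlampos (j+2) (by omega)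
    have := hα (j+2) (by omega)
    positivity
  have hcomp1 : Summable (fun j : ℕ => 16 * (α (j+2) * Real.log ((j+2:ℕ)) / ((j+2:ℕ) : ℝ)^2)) :=
    ((_root_.summable_nat_add_iff 2).2 hseg).mul_left 16
  have hsum1 : Summable t1 := by
    refine Summable.of_nonneg_of_le ht1nonneg (fun j => ?_) hcomp1
    have hpos := hlampos (j+2) (by omega)
    have hge := hlamge (j+2) (by omega)
    have hαn := hα (j+2) (by omega)
    have hc : ((j+2:ℕ) : ℝ) = (j:ℝ)+2 := by push_cast; ring
    have hge' : ((j:ℝ)+2)*((j:ℝ)+1)/2 ≤ lam (j+2) := by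
      rw [hlamval j]; linarith
    rw [ht1eq j, hc]
    set x := (j:ℝ) with hx
    have hx0 : (0:ℝ) ≤ x := Nat.cast_nonneg j
    have hL : (1:ℝ)/2 ≤ Real.log (x+2) := hlog_half (x+2) (by linarith)
    rw [div_le_iff₀ (by positivity), show
      16 * (α (j+2) * Real.log (x+2) / (x+2)^2) * ((x+1) * lam (j+2))
      = (16 * α (j+2) * Real.log (x+2) * (x+1) * lam (j+2)) / (x+2)^2 by ring,
      le_div_iff₀ (by positivity)]
    exact aux1 hαn hx0 hL hge'
  -- tail sums
  set av : ℕ → ℝ := fun m => α m / lam m with hav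
  have havnonneg : ∀ m : ℕ, 2 ≤ m → 0 ≤ av m := fun m hm =>
    div_nonneg (hα m hm) (hlampos m hm).le
  have hdivb : ∀ m : ℕ, 3 ≤ m → av m ≤ 3 * (α m * Real.log m / (m:ℝ)^2) := by
    intro m hm
    have hm2 : (2:ℕ) ≤ m := by omega
    have hpos := hlampos m hm2
    have hge := hlamge m hm2
    have hαn := hα m hm2
    have hy : (3:ℝ) ≤ (m:ℝ) := by exact_mod_cast hm
    have hL : 1 ≤ Real.log m := hlog_ge_one _ hy
    rw [hav]
    simp only
    rw [div_le_iff₀ hpos, show 3 * (α m * Real.log m / (m:ℝ)^2) * lam m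
      = (3 * α m * Real.log m * lam m) / (m:ℝ)^2 by ring, le_div_iff₀ (by positivity)]
    exact aux2 hαn hy hL hge
  set ind : ℕ → ℕ → ℝ := fun b m => if b ≤ m then av (m+1) else 0 with hind
  have hindnonneg : ∀ b : ℕ, 2 ≤ b → ∀ m : ℕ, 0 ≤ ind b m := by
    intro b hb m
    rw [hind]
    simp only
    split
    · exact havnonneg (m+1) (by omega)
    · exact le_refl 0
  have hcompnonneg : ∀ (c : ℝ), 0 ≤ c → ∀ m : ℕ,
      0 ≤ c * (α (m+1) * Real.log ((m+1:ℕ)) / ((m+1:ℕ) : ℝ)^2) := by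
    intro c hc m
    rcases Nat.eq_zero_or_pos m with rfl | hm
    · norm_num
    · have h1 : 0 ≤ α (m+1) := hα (m+1) (by omega)
      have h2 : (0:ℝ) ≤ Real.log ((m+1:ℕ)) := Real.log_natCast_nonneg _
      positivity
  have hcomp2 : Summable (fun m : ℕ => 3 * (α (m+1) * Real.log ((m+1:ℕ)) / ((m+1:ℕ) : ℝ)^2)) :=
    ((_root_.summable_nat_add_iff 1).2 hseg).mul_left 3
  have hindsum : ∀ b : ℕ, 2 ≤ b → Summable (ind b) := by
    intro b hb
    refine Summable.of_nonneg_of_le (hindnonneg b hb) (fun m => ?_) hcomp2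
    rw [hind]
    simp only
    split
    · next hbm =>
      exact hdivb (m+1) (by omega)
    · exact hcompnonneg 3 (by norm_num) m
  set T : ℕ → ℝ := fun b => ∑' m, ind b m with hT
  have hTnonneg : ∀ b : ℕ, 2 ≤ b → 0 ≤ T b := fun b hb =>
    tsum_nonneg (hindnonneg b hb)
  have claimA : ∀ b : ℕ, 2 ≤ b → ∀ n : ℕ, b ≤ n →
      1 - G n b ≤ ∑ m ∈ Finset.Ico b n, av (m+1) := by
    intro b hb
    refine Nat.le_induction ?_ ?_
    · rw [hGbb b hb]; simp
    · intro n hn ih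
      have habs := hGinc n b hb hn
      have h1 := (abs_le.1 habs).1
      rw [Finset.sum_Ico_succ_top hn]
      have h2 : av (n+1) = α (n+1) / lam (n+1) := rfl
      linarith
  have claimT : ∀ b : ℕ, 2 ≤ b → ∀ n : ℕ, b ≤ n → 1 - G n b ≤ T b := by
    intro b hb n hn
    refine (claimA b hb n hn).trans ?_
    have heq : ∑ m ∈ Finset.Ico b n, av (m+1) = ∑ m ∈ Finset.Ico b n, ind b m := by
      refine Finset.sum_congr rfl (fun m hm => ?_)
      rw [hind]
      simp only
      rw [if_pos (Finset.mem_Ico.1 hm).1]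
    rw [heq, hT]
    exact Summable.sum_le_tsum _ (fun m _ => hindnonneg b hb m) (hindsum b hb)
  have hGinfle1 : ∀ b : ℕ, 2 ≤ b → Ginf b ≤ 1 := by
    intro b hb
    refine le_of_tendsto (hGinf b hb) ?_
    filter_upwards [eventually_ge_atTop b] with n hn using (hG01 n b hb hn).2
  have hGinfT : ∀ b : ℕ, 2 ≤ b → 1 - Ginf b ≤ T b := by
    intro b hb
    have htd : Tendsto (fun n => 1 - G n b) atTop (nhds (1 - Ginf b)) :=
      (hGinf b hb).const_sub 1
    refine le_of_tendsto htd ?_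
    filter_upwards [eventually_ge_atTop b] with n hn using claimT b hb n hn
  -- double sum trick
  have hharm : ∀ m : ℕ, ∑ j ∈ Finset.range m, 1/((j:ℝ)+1) = (harmonic m : ℝ) := by
    intro m
    rw [harmonic]
    push_cast
    simp [one_div]
  have hharmnn : ∀ m : ℕ, 0 ≤ (harmonic m : ℝ) := by
    intro m
    rw [← hharm]
    exact Finset.sum_nonneg (fun j _ => by positivity)
  set F : ℕ × ℕ → ℝ := fun p => ind (p.2 + 2) p.1 / ((p.2:ℝ)+1) with hF
  have hFnonneg : ∀ p : ℕ × ℕ, 0 ≤ F p := by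
    intro p
    exact div_nonneg (hindnonneg (p.2+2) (by omega) p.1) (by positivity)
  have hcomp3 : Summable (fun m : ℕ => 8 * (α (m+1) * Real.log ((m+1:ℕ)) / ((m+1:ℕ) : ℝ)^2)) :=
    ((_root_.summable_nat_add_iff 1).2 hseg).mul_left 8
  have hFrow : ∀ m j : ℕ, ¬ (j + 2 ≤ m) → F (m, j) = 0 := by
    intro m j hj
    rw [hF, hind]
    simp only
    rw [if_neg hj, zero_div]
  have hFsum : Summable F := by
    refine (summable_prod_of_nonneg hFnonneg).2 ⟨fun m => ?_, ?_⟩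
    · refine summable_of_ne_finset_zero (s := Finset.range m) (fun j hj => ?_)
      refine hFrow m j ?_
      simp only [Finset.mem_range] at hj
      omega
    · refine Summable.of_nonneg_of_le (fun m => tsum_nonneg (fun j => hFnonneg (m, j)))
        (fun m => ?_) hcomp3
      rw [tsum_eq_sum (s := Finset.range m) (fun j hj => hFrow m j (by
        simp only [Finset.mem_range] at hj; omega))]
      rcases Nat.eq_zero_or_pos m with rfl | hm
      · norm_num
      · have hstep1 : ∑ j ∈ Finset.range m, F (m, j)
            ≤ ∑ j ∈ Finset.range m, av (m+1) * (1/((j:ℝ)+1)) := by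
          refine Finset.sum_le_sum (fun j _ => ?_)
          rw [hF, hind]
          simp only
          split
          · rw [div_eq_mul_one_div]
          · have := havnonneg (m+1) (by omega)
            rw [zero_div]
            positivity
        have hstep2 : ∑ j ∈ Finset.range m, av (m+1) * (1/((j:ℝ)+1))
            = av (m+1) * (harmonic m : ℝ) := by
          rw [← Finset.mul_sum, hharm]
        have hαn : 0 ≤ α (m+1) := hα (m+1) (by omega)
        have hpos := hlampos (m+1) (by omega)
        have hge := hlamge (m+1) (by omega)
        have hy : ((m+1:ℕ) : ℝ) = (m:ℝ)+1 := by push_cast; ring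
        have hstep3 : av (m+1) * (harmonic m : ℝ)
            ≤ 8 * (α (m+1) * Real.log ((m+1:ℕ)) / ((m+1:ℕ) : ℝ)^2) := by
          have hH := harmonic_le_one_add_log m
          have hHnn := hharmnn m
          rw [hav]
          simp only
          rw [div_mul_eq_mul_div, div_le_iff₀ hpos, hy,
            show 8 * (α (m+1) * Real.log ((m:ℝ)+1) / ((m:ℝ)+1)^2) * lam (m+1)
              = (8 * α (m+1) * Real.log ((m:ℝ)+1) * lam (m+1)) / ((m:ℝ)+1)^2 by ring,
            le_div_iff₀ (by positivity)]
          have hge' : ((m:ℝ)+1) * (m:ℝ) / 2 ≤ lam (m+1) := by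
            have : ((m+1:ℕ):ℝ) * (((m+1:ℕ):ℝ) - 1) / 2 ≤ lam (m+1) := hge
            rw [hy] at this
            calc ((m:ℝ)+1) * (m:ℝ) / 2 = ((m:ℝ)+1) * (((m:ℝ)+1) - 1) / 2 := by ring
              _ ≤ lam (m+1) := this
          rcases eq_or_lt_of_le (by omega : 1 ≤ m) with hm1 | hm2
          · -- m = 1
            have hm1' : m = 1 := hm1.symm
            subst hm1'
            have hh1 : (harmonic 1 : ℝ) = 1 := by norm_num [harmonic]
            rw [hh1]
            have hc2 : ((1:ℕ):ℝ) + 1 = 2 := by norm_num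
            rw [hc2]
            have hlam2 : (1:ℝ) ≤ lam 2 := by
              have := hge'
              norm_num at this
              linarith
            have h4 := aux4 hαn hlog2 hlam2
            norm_num at h4 ⊢
            exact h4
          · -- m ≥ 2
            have hm2' : (2:ℝ) ≤ (m:ℝ) := by exact_mod_cast hm2
            have hL : 1 ≤ Real.log ((m:ℝ)+1) := hlog_ge_one _ (by linarith)
            have hlm : Real.log (m:ℝ) ≤ Real.log ((m:ℝ)+1) :=
              Real.log_le_log (by linarith) (by linarith)
            have hH' : (harmonic m : ℝ) ≤ 1 + Real.log ((m:ℝ)+1) := by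
              calc (harmonic m : ℝ) ≤ 1 + Real.log m := hH
                _ ≤ 1 + Real.log ((m:ℝ)+1) := by linarith
            exact aux3 hαn hHnn hH' hL hm2' hge'
        calc ∑ j ∈ Finset.range m, F (m, j)
            ≤ av (m+1) * (harmonic m : ℝ) := by rw [← hstep2]; exact hstep1
          _ ≤ _ := hstep3
  have hFswap : Summable (fun p : ℕ × ℕ => F (p.2, p.1)) := by
    have := (Equiv.prodComm ℕ ℕ).summable_iff.2 hFsum
    exact this
  have hg : Summable (fun j : ℕ => ∑' m, F (m, j)) := by
    have hnn : 0 ≤ (fun p : ℕ × ℕ => F (p.2, p.1)) := fun p => hFnonneg _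
    exact ((summable_prod_of_nonneg hnn).1 hFswap).2
  have hgval : ∀ j : ℕ, ∑' m, F (m, j) = T (j+2) / ((j:ℝ)+1) := by
    intro j
    rw [hT]
    simp only
    rw [← tsum_div_const]
  -- second series facts
  set g2 : ℕ → ℝ := fun j => ((j:ℝ)+2)/lam (j+2) * (1 - Ginf (j+2)) with hg2
  have hblam : ∀ j : ℕ, ((j:ℝ)+2)/lam (j+2) ≤ 2/((j:ℝ)+1) := by
    intro j
    have hpos := hlampos (j+2) (by omega)
    rw [div_le_div_iff₀ hpos (by positivity), hlamval j]
    nlinarith [hα (j+2) (by omega : 2 ≤ j+2), (Nat.cast_nonneg j : (0:ℝ) ≤ (j:ℝ))]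
  have hg2nonneg : ∀ j : ℕ, 0 ≤ g2 j := by
    intro j
    have hpos := hlampos (j+2) (by omega)
    have h1 := hGinfle1 (j+2) (by omega)
    rw [hg2]
    simp only
    exact mul_nonneg (by positivity) (by linarith)
  have hg2le : ∀ j : ℕ, g2 j ≤ 2 * (T (j+2) / ((j:ℝ)+1)) := by
    intro j
    have hpos := hlampos (j+2) (by omega)
    have h1 : 1 - Ginf (j+2) ≤ T (j+2) := hGinfT (j+2) (by omega)
    have h0 : 0 ≤ 1 - Ginf (j+2) := by linarith [hGinfle1 (j+2) (by omega : 2 ≤ j+2)]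
    have h2 := hblam j
    calc g2 j ≤ (2/((j:ℝ)+1)) * (T (j+2)) :=
          mul_le_mul h2 h1 h0 (by positivity)
      _ = 2 * (T (j+2) / ((j:ℝ)+1)) := by ring
  have hgT : Summable (fun j : ℕ => T (j+2) / ((j:ℝ)+1)) := hg.congr hgval
  have hsum2 : Summable g2 := Summable.of_nonneg_of_le hg2nonneg hg2le (hgT.mul_left 2)
  -- dominated convergence setup
  set f2 : ℕ → ℕ → ℝ :=
    fun n j => if j + 2 ≤ n then ((j:ℝ)+2)/lam (j+2) * (1 - G n (j+2)) else 0 with hf2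
  have hbound : ∀ n j : ℕ, ‖f2 n j‖ ≤ 2 * (T (j+2) / ((j:ℝ)+1)) := by
    intro n j
    have hTnn := hTnonneg (j+2) (by omega)
    rw [hf2]
    simp only
    split
    · next hjn =>
      have hpos := hlampos (j+2) (by omega)
      have hmem := hG01 n (j+2) (by omega) hjn
      have h1 : 1 - G n (j+2) ≤ T (j+2) := claimT (j+2) (by omega) n hjn
      have h0 : 0 ≤ 1 - G n (j+2) := by linarith [hmem.2]
      rw [Real.norm_of_nonneg (mul_nonneg (by positivity) h0)]
      calc ((j:ℝ)+2)/lam (j+2) * (1 - G n (j+2)) ≤ (2/((j:ℝ)+1)) * (T (j+2)) :=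
            mul_le_mul (hblam j) h1 h0 (by positivity)
        _ = 2 * (T (j+2) / ((j:ℝ)+1)) := by ring
    · rw [norm_zero]
      positivity
  have hlim : ∀ j : ℕ, Tendsto (fun n => f2 n j) atTop (nhds (g2 j)) := by
    intro j
    have h1 : Tendsto (fun n => ((j:ℝ)+2)/lam (j+2) * (1 - G n (j+2))) atTop (nhds (g2 j)) := by
      rw [hg2]
      simp only
      exact ((hGinf (j+2) (by omega)).const_sub 1).const_mul _
    have hEE : (fun n => ((j:ℝ)+2)/lam (j+2) * (1 - G n (j+2))) =ᶠ[atTop] (fun n => f2 n j) := by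
      filter_upwards [eventually_ge_atTop (j+2)] with n hn
      rw [hf2]
      simp only [if_pos hn]
    exact Tendsto.congr' hEE h1
  have hDCT : Tendsto (fun n => ∑' j, f2 n j) atTop (nhds (∑' j, g2 j)) :=
    tendsto_tsum_of_dominated_convergence (hgT.mul_left 2) hlim (Eventually.of_forall hbound)
  refine ⟨hsum1, hsum2, ?_, ?_⟩
  · exact add_nonneg (mul_nonneg (by linarith) (tsum_nonneg ht1nonneg))
      (mul_nonneg (by linarith) (tsum_nonneg hg2nonneg))
  · have hT1 : Tendsto (fun n : ℕ => ∑ j ∈ Finset.range n, t1 j) atTop (nhds (∑' j, t1 j)) :=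
      hsum1.hasSum.tendsto_sum_nat
    have hT1' : Tendsto (fun n : ℕ => ∑ j ∈ Finset.range (n-1), t1 j) atTop
        (nhds (∑' j, t1 j)) := hT1.comp (tendsto_sub_atTop_nat 1)
    have hcomb : Tendsto (fun n : ℕ =>
        -(θ/2 * (∑ j ∈ Finset.range (n-1), t1 j) + θ/2 * (∑' j, f2 n j))) atTop
        (nhds (-(θ/2 * (∑' j, t1 j) + θ/2 * (∑' j, g2 j)))) :=
      ((hT1'.const_mul (θ/2)).add (hDCT.const_mul (θ/2))).neg
    refine Tendsto.congr' ?_ hcomb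
    filter_upwards [eventually_ge_atTop 2] with n hn
    have hn1 : 1 ≤ n := by omega
    have hmap2 : (Finset.range (n-1)).map (addRightEmbedding 2) = Finset.Icc 2 n := by
      rw [Finset.range_eq_Ico, Finset.map_add_right_Ico]
      have h2 : n - 1 + 2 = n + 1 := by omega
      rw [h2, Finset.Ico_add_one_right_eq_Icc]
    have hmap1 : (Finset.range (n-1)).map (addRightEmbedding 1) = Finset.Icc 1 (n-1) := by
      rw [Finset.range_eq_Ico, Finset.map_add_right_Ico]
      have h2 : n - 1 + 1 = n := by omega
      rw [h2, show Finset.Ico (0+1) n = Finset.Ico 1 ((n-1)+1) by rw [h2], Finset.Ico_add_one_right_eq_Icc]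
    have hEsum : E n = θ/2 * ∑ j ∈ Finset.range (n-1),
        (((j+2:ℕ):ℝ)/lam (j+2) * G n (j+2)) := by
      rw [hE n, ← hmap2, Finset.sum_map]
      rfl
    have hhsum : h n = ∑ j ∈ Finset.range (n-1), 1/(((j+1:ℕ):ℝ)) := by
      rw [hh n, ← hmap1, Finset.sum_map]
      rfl
    have htsumf : (∑' j, f2 n j) = ∑ j ∈ Finset.range (n-1), f2 n j := by
      refine tsum_eq_sum (fun j hj => ?_)
      rw [hf2]
      simp only
      rw [if_neg]
      simp only [Finset.mem_range] at hj
      omega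
    have hterm : ∀ j ∈ Finset.range (n-1),
        θ/2 * (((j+2:ℕ):ℝ)/lam (j+2) * G n (j+2)) - θ * (1/((j+1:ℕ):ℝ))
        = -(θ/2 * t1 j + θ/2 * f2 n j) := by
      intro j hj
      have hjn : j + 2 ≤ n := by
        simp only [Finset.mem_range] at hj
        omega
      have hpos := hlampos (j+2) (by omega)
      have hc : ((j+2:ℕ):ℝ) = (j:ℝ)+2 := by push_cast; ring
      have hc1 : ((j+1:ℕ):ℝ) = (j:ℝ)+1 := by push_cast; ring
      rw [hf2]
      simp only [if_pos hjn]
      rw [hc, hc1, ht1]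
      simp only
      have hne2 : ((j:ℝ)+2) ≠ 0 := by positivity
      have hne1 : ((j:ℝ)+1) ≠ 0 := by positivity
      field_simp
      ring
    calc -(θ/2 * (∑ j ∈ Finset.range (n-1), t1 j) + θ/2 * (∑' j, f2 n j))
        = ∑ j ∈ Finset.range (n-1), -(θ/2 * t1 j + θ/2 * f2 n j) := by
          rw [htsumf, Finset.sum_neg_distrib, Finset.sum_add_distrib,
            Finset.mul_sum, Finset.mul_sum]
      _ = ∑ j ∈ Finset.range (n-1),
            (θ/2 * (((j+2:ℕ):ℝ)/lam (j+2) * G n (j+2)) - θ * (1/((j+1:ℕ):ℝ))) :=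
          (Finset.sum_congr rfl hterm).symm
      _ = E n - θ * h n := by
          rw [Finset.sum_sub_distrib, hEsum, hhsum, Finset.mul_sum, Finset.mul_sum]
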